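/- For all ε, δ, γ ∈ ℝ and j ∈ {1,2}, on the open subset of ℳ³𝒯 where 1 − εδγ·𝐛_k·𝐚_k ≠ 0 and 1 − εδγ·𝐛_k·𝐚_{k−1} ≠ 0 for all k, the pull-back of the flow M²TL(ε,δ) under the Miura map M_j(ε,δ;γ) coincides with the triple modified Toda lattice M³TL(ε,δ,γ): DM_j(ε,δ;γ)(𝐚,𝐛)·F_{M³TL(ε,δ,γ)}(𝐚,𝐛) = F_{M²TL(ε,δ)}(M_j(ε,δ;γ)(𝐚,𝐛)) at every point of this domain. -/

import Mathlib

open scoped BigOperators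

/-- Index set for the periodic phase space `ℝ^{2N}`: `Sum.inl k` indexes the first
family of coordinates and `Sum.inr k` the second family, `k ∈ ℤ/Nℤ`. -/
abbrev Idx (N : ℕ) : Type := (ZMod N) ⊕ (ZMod N)

/-- The phase space `ℝ^{2N}`. -/
abbrev Phase (N : ℕ) : Type := Idx N → ℝ

/-- First family of coordinates. -/
def c1 {N : ℕ} (x : Phase N) (k : ZMod N) : ℝ := x (Sum.inl k)

/-- Second family of coordinates. -/
def c2 {N : ℕ} (x : Phase N) (k : ZMod N) : ℝ := x (Sum.inr k)

/-- A structure matrix on `Phase N`. -/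
abbrev SM (N : ℕ) : Type := Phase N → Idx N → Idx N → ℝ

/-- Partial derivative of `F` at `x` in the `i`-th coordinate direction. -/
noncomputable def pderiv {N : ℕ} [NeZero N] (i : Idx N) (F : Phase N → ℝ)
    (x : Phase N) : ℝ :=
  fderiv ℝ F x (Pi.single i 1)

/-- The bracket of two functions associated with a structure matrix `J`:
`{F,G}(x) = ∑_{i,j} ∂_i F(x) · J_{ij}(x) · ∂_j G(x)`. -/
noncomputable def bracket {N : ℕ} [NeZero N] (J : SM N) (F G : Phase N → ℝ)
    (x : Phase N) : ℝ :=
  ∑ i : Idx N, ∑ j : Idx N, pderiv i F x * J x i j * pderiv j G x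

/-- The Jacobi identity for `J` holds at every point satisfying `P`. -/
def JacobiOn {N : ℕ} [NeZero N] (J : SM N) (P : Phase N → Prop) : Prop :=
  ∀ F G H : Phase N → ℝ, ContDiff ℝ (⊤ : ℕ∞) F → ContDiff ℝ (⊤ : ℕ∞) G →
    ContDiff ℝ (⊤ : ℕ∞) H → ∀ x : Phase N, P x →
      bracket J (bracket J F G) H x + bracket J (bracket J G H) F x +
        bracket J (bracket J H F) G x = 0

/-- `J` defines a Poisson bracket: the Jacobi identity holds everywhere. -/
def IsPoisson {N : ℕ} [NeZero N] (J : SM N) : Prop :=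
  JacobiOn J fun _ => True

/-- `f(x) = J(x)∇H(x)`: the vector field `f` is Hamiltonian at `x` with respect
to the structure matrix `J`, with Hamilton function `H`. -/
def HamAt {N : ℕ} [NeZero N] (J : SM N) (f : Phase N → Phase N)
    (H : Phase N → ℝ) (x : Phase N) : Prop :=
  ∀ i : Idx N, f x i = ∑ j : Idx N, J x i j * pderiv j H x

/-- `Dφ(x)·J(x)·Dφ(x)ᵀ = J'(φ(x))`: `φ` is a Poisson map at `x` from the
structure matrix `J` to the structure matrix `J'`. -/
def PoissonMapAt {N : ℕ} [NeZero N] (φ : Phase N → Phase N) (J J' : SM N)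
    (x : Phase N) : Prop :=
  ∀ i j : Idx N,
    (∑ k : Idx N, ∑ l : Idx N,
      pderiv k (fun y => φ y i) x * J x k l * pderiv l (fun y => φ y j) x)
      = J' (φ x) i j

/-- `Dφ(x)·f(x) = g(φ(x))`: the vector field `f` is the pull-back of the vector
field `g` under `φ`, at the point `x`. -/
def PullbackAt {N : ℕ} [NeZero N] (φ : Phase N → Phase N)
    (f g : Phase N → Phase N) (x : Phase N) : Prop :=
  ∀ i : Idx N, (∑ k : Idx N, pderiv k (fun y => φ y i) x * f x k) = g (φ x) i

/-- The double modified Toda lattice vector field `M²TL(ε,δ)`: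
`ṙ_k = (1+εr_k)(1+δr_k)(s_k - s_{k-1})`, `ṡ_k = s_k(1+εδs_k)(r_{k+1} - r_k)`,
with coordinates `r_k = c1 x k`, `s_k = c2 x k`. -/
noncomputable def m2tlF (ε δ : ℝ) {N : ℕ} (x : Phase N) : Phase N := fun i =>
  match i with
  | Sum.inl k => (1 + ε * c1 x k) * (1 + δ * c1 x k) * (c2 x k - c2 x (k - 1))
  | Sum.inr k => c2 x k * (1 + ε * δ * c2 x k) * (c1 x (k + 1) - c1 x k)

/-- The triple modified Toda lattice vector field `M³TL(ε,δ,γ)`, with coordinates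
`𝐛_k = c1 x k`, `𝐚_k = c2 x k`. -/
noncomputable def m3tlF (ε δ γ : ℝ) {N : ℕ} (x : Phase N) : Phase N := fun i =>
  match i with
  | Sum.inl k =>
      (1 + ε * c1 x k) * (1 + δ * c1 x k) * (1 + γ * c1 x k) *
        (c2 x k / (1 - ε * δ * γ * c1 x k * c2 x k)
          - c2 x (k - 1) / (1 - ε * δ * γ * c1 x k * c2 x (k - 1)))
  | Sum.inr k =>
      c2 x k * (1 + ε * δ * c2 x k) * (1 + ε * γ * c2 x k) * (1 + δ * γ * c2 x k) *
        (c1 x (k + 1) / (1 - ε * δ * γ * c1 x (k + 1) * c2 x k)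
          - c1 x k / (1 - ε * δ * γ * c1 x k * c2 x k))

/-- Miura map `M₁(ε,δ;γ) : ℳ³𝒯 → ℳ²𝒯`. -/
noncomputable def miuraM3T1 (ε δ γ : ℝ) {N : ℕ} (x : Phase N) : Phase N := fun i =>
  match i with
  | Sum.inl k =>
      (c1 x k + γ * c2 x (k - 1) + γ * (ε + δ) * c1 x k * c2 x (k - 1))
        / (1 - ε * δ * γ * c1 x k * c2 x (k - 1))
  | Sum.inr k =>
      c2 x k * (1 + γ * c1 x k) / (1 - ε * δ * γ * c1 x k * c2 x k)

/-- Miura map `M₂(ε,δ;γ) : ℳ³𝒯 → ℳ²𝒯`. -/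
noncomputable def miuraM3T2 (ε δ γ : ℝ) {N : ℕ} (x : Phase N) : Phase N := fun i =>
  match i with
  | Sum.inl k =>
      (c1 x k + γ * c2 x k + γ * (ε + δ) * c1 x k * c2 x k)
        / (1 - ε * δ * γ * c1 x k * c2 x k)
  | Sum.inr k =>
      c2 x k * (1 + γ * c1 x (k + 1)) / (1 - ε * δ * γ * c1 x (k + 1) * c2 x k)

open ContinuousLinearMap in
lemma pderiv_form {N : ℕ} [NeZero N] (i j : Idx N) (hij : i ≠ j) (B C D E : ℝ)
    (x : Phase N) (hx : 1 - E * (x i * x j) ≠ 0) (l : Idx N) :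
    pderiv l (fun y => (B * y i + C * y j + D * (y i * y j)) / (1 - E * (y i * y j))) x
      = (if l = i then (B + D * x j + C * E * (x j)^2) / (1 - E * (x i * x j))^2 else 0)
      + (if l = j then (C + D * x i + B * E * (x i)^2) / (1 - E * (x i * x j))^2 else 0) := by
  set Pi' : Phase N →L[ℝ] ℝ := ContinuousLinearMap.proj i with hPi
  set Pj' : Phase N →L[ℝ] ℝ := ContinuousLinearMap.proj j with hPj
  have h1 : HasFDerivAt (fun y : Phase N => y i) Pi' x := Pi'.hasFDerivAt
  have h2 : HasFDerivAt (fun y : Phase N => y j) Pj' x := Pj'.hasFDerivAt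
  have hnum : HasFDerivAt (fun y : Phase N => B * y i + C * y j + D * (y i * y j))
      ((B • Pi' + C • Pj') + D • (x i • Pj' + x j • Pi')) x :=
    ((h1.const_mul B).add (h2.const_mul C)).add ((h1.mul h2).const_mul D)
  have hden : HasFDerivAt (fun y : Phase N => 1 - E * (y i * y j))
      ((-E) • (x i • Pj' + x j • Pi')) x := by
    have := ((h1.mul h2).const_mul (-E)).const_add 1
    simp only [neg_mul, ← sub_eq_add_neg] at this; exact this
  have hinv : HasFDerivAt (fun y : Phase N => (1 - E * (y i * y j))⁻¹)
      ((smulRight (1 : ℝ →L[ℝ] ℝ) (-((1 - E * (x i * x j)) ^ 2)⁻¹)).comp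
        ((-E) • (x i • Pj' + x j • Pi'))) x :=
    (hasFDerivAt_inv hx).comp x hden
  have hL : HasFDerivAt
      (fun y : Phase N => (B * y i + C * y j + D * (y i * y j)) / (1 - E * (y i * y j)))
      ((B * x i + C * x j + D * (x i * x j)) •
          ((smulRight (1 : ℝ →L[ℝ] ℝ) (-((1 - E * (x i * x j)) ^ 2)⁻¹)).comp
            ((-E) • (x i • Pj' + x j • Pi')))
        + (1 - E * (x i * x j))⁻¹ • ((B • Pi' + C • Pj') + D • (x i • Pj' + x j • Pi'))) x := by
    have := hnum.mul hinv
    exact this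
  unfold pderiv
  rw [hL.fderiv]
  simp only [ContinuousLinearMap.add_apply, ContinuousLinearMap.smul_apply,
    ContinuousLinearMap.comp_apply, ContinuousLinearMap.smulRight_apply,
    ContinuousLinearMap.one_apply, hPi, hPj, ContinuousLinearMap.proj_apply,
    Pi.single_apply, smul_eq_mul]
  rcases eq_or_ne l i with rfl | hli
  · rw [if_pos rfl, if_neg hij]
    simp only [if_true, if_neg (Ne.symm hij)]
    field_simp
    ring
  · rcases eq_or_ne l j with rfl | hlj
    · rw [if_neg hli, if_pos rfl]
      simp only [if_true, if_neg (Ne.symm hli)]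
      field_simp
      ring
    · rw [if_neg hli, if_neg hlj]
      simp only [if_neg (Ne.symm hli), if_neg (Ne.symm hlj)]
      ring

lemma pullback_sum {N : ℕ} [NeZero N] (i j : Idx N) (hij : i ≠ j) (B C D E : ℝ)
    (x : Phase N) (f : Idx N → ℝ) (hx : 1 - E * (x i * x j) ≠ 0) :
    ∑ l : Idx N,
        pderiv l (fun y => (B * y i + C * y j + D * (y i * y j)) / (1 - E * (y i * y j))) x
          * f l
      = (B + D * x j + C * E * (x j)^2) / (1 - E * (x i * x j))^2 * f i
        + (C + D * x i + B * E * (x i)^2) / (1 - E * (x i * x j))^2 * f j := by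
  simp only [pderiv_form i j hij B C D E x hx, add_mul, ite_mul, zero_mul]
  rw [Finset.sum_add_distrib, Finset.sum_ite_eq', Finset.sum_ite_eq']
  simp

set_option maxHeartbeats 4000000

/-- on the open set where `1 - εδγ𝐛_k𝐚_k ≠ 0` and
`1 - εδγ𝐛_k𝐚_{k-1} ≠ 0`, the pull-back of `M²TL(ε,δ)` under either Miura map
`M₁(ε,δ;γ), M₂(ε,δ;γ)` coincides with `M³TL(ε,δ,γ)`. -/
theorem stmt11 (N : ℕ) [NeZero N] (hN : 5 ≤ N) (ε δ γ : ℝ) :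
    ∀ x : Phase N,
      (∀ k : ZMod N, 1 - ε * δ * γ * c1 x k * c2 x k ≠ 0 ∧
        1 - ε * δ * γ * c1 x k * c2 x (k - 1) ≠ 0) →
      PullbackAt (miuraM3T1 ε δ γ) (m3tlF ε δ γ) (m2tlF ε δ) x ∧
      PullbackAt (miuraM3T2 ε δ γ) (m3tlF ε δ γ) (m2tlF ε δ) x := by
  intro x h
  have hD : ∀ p q : ZMod N, (1 - ε * δ * γ * c1 x p * c2 x q ≠ 0) →
      ((1 : ℝ) - (ε * δ * γ) * (x (Sum.inl p) * x (Sum.inr q)) ≠ 0) := by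
    intro p q hpq hc
    exact hpq (by simp only [c1, c2]; linear_combination hc)
  have hk1 : ∀ k : ZMod N, k - 1 + 1 = k := fun k => by ring
  have hk2 : ∀ k : ZMod N, k + 1 - 1 = k := fun k => by ring
  constructor
  · intro i
    rcases i with k | k
    · have hq : (1 : ℝ) - (ε * δ * γ) * (x (Sum.inl k) * x (Sum.inr (k - 1))) ≠ 0 :=
        hD k (k - 1) (h k).2
      have heq : (fun y : Phase N => miuraM3T1 ε δ γ y (Sum.inl k)) =
          fun y : Phase N => (1 * y (Sum.inl k) + γ * y (Sum.inr (k - 1))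
              + (γ * (ε + δ)) * (y (Sum.inl k) * y (Sum.inr (k - 1))))
            / (1 - (ε * δ * γ) * (y (Sum.inl k) * y (Sum.inr (k - 1)))) := by
        funext y; simp only [miuraM3T1, c1, c2]; ring
      rw [heq, pullback_sum _ _ (by simp) 1 γ (γ * (ε + δ)) (ε * δ * γ) x _ hq]
      have d1 := (h k).1; have d2 := (h k).2; have d3 := (h (k - 1)).1
      simp only [c1, c2] at d1 d2 d3
      simp only [m3tlF, m2tlF, miuraM3T1, c1, c2, hk1, hk2]
      set u := x (Sum.inl k) with hu
      set v := x (Sum.inr k) with hv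
      set w := x (Sum.inr (k - 1)) with hw
      set z := x (Sum.inl (k - 1)) with hz
      set t := x (Sum.inl (k + 1)) with ht
      set p := x (Sum.inr (k + 1)) with hp
      have e1 : 1 - γ*ε*δ*u*v ≠ 0 := by intro hc; apply d1; linear_combination hc
      have e2 : 1 - γ*ε*δ*w*u ≠ 0 := by intro hc; apply d2; linear_combination hc
      have e3 : 1 - γ*ε*δ*w*z ≠ 0 := by intro hc; apply d3; linear_combination hc
      field_simp
      ring
    · have hq : (1 : ℝ) - (ε * δ * γ) * (x (Sum.inl k) * x (Sum.inr k)) ≠ 0 :=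
        hD k k (h k).1
      have heq : (fun y : Phase N => miuraM3T1 ε δ γ y (Sum.inr k)) =
          fun y : Phase N => (0 * y (Sum.inl k) + 1 * y (Sum.inr k)
              + γ * (y (Sum.inl k) * y (Sum.inr k)))
            / (1 - (ε * δ * γ) * (y (Sum.inl k) * y (Sum.inr k))) := by
        funext y; simp only [miuraM3T1, c1, c2]; ring
      rw [heq, pullback_sum _ _ (by simp) 0 1 γ (ε * δ * γ) x _ hq]
      have d1 := (h k).1; have d2 := (h k).2; have d3 := (h (k + 1)).2
      rw [hk2] at d3
      simp only [c1, c2] at d1 d2 d3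
      simp only [m3tlF, m2tlF, miuraM3T1, c1, c2, hk1, hk2]
      set u := x (Sum.inl k) with hu
      set v := x (Sum.inr k) with hv
      set w := x (Sum.inr (k - 1)) with hw
      set z := x (Sum.inl (k - 1)) with hz
      set t := x (Sum.inl (k + 1)) with ht
      set p := x (Sum.inr (k + 1)) with hp
      have e1 : 1 - γ*v*ε*δ*u ≠ 0 := by intro hc; apply d1; linear_combination hc
      have e2 : 1 - γ*ε*δ*u*w ≠ 0 := by intro hc; apply d2; linear_combination hc
      have e3 : 1 - γ*v*ε*δ*t ≠ 0 := by intro hc; apply d3; linear_combination hc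
      field_simp
      ring
  · intro i
    rcases i with k | k
    · have hq : (1 : ℝ) - (ε * δ * γ) * (x (Sum.inl k) * x (Sum.inr k)) ≠ 0 :=
        hD k k (h k).1
      have heq : (fun y : Phase N => miuraM3T2 ε δ γ y (Sum.inl k)) =
          fun y : Phase N => (1 * y (Sum.inl k) + γ * y (Sum.inr k)
              + (γ * (ε + δ)) * (y (Sum.inl k) * y (Sum.inr k)))
            / (1 - (ε * δ * γ) * (y (Sum.inl k) * y (Sum.inr k))) := by
        funext y; simp only [miuraM3T2, c1, c2]; ring
      rw [heq, pullback_sum _ _ (by simp) 1 γ (γ * (ε + δ)) (ε * δ * γ) x _ hq]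
      have d1 := (h k).1; have d2 := (h k).2; have d3 := (h (k + 1)).2
      rw [hk2] at d3
      simp only [c1, c2] at d1 d2 d3
      simp only [m3tlF, m2tlF, miuraM3T2, c1, c2, hk1, hk2]
      set u := x (Sum.inl k) with hu
      set v := x (Sum.inr k) with hv
      set w := x (Sum.inr (k - 1)) with hw
      set z := x (Sum.inl (k - 1)) with hz
      set t := x (Sum.inl (k + 1)) with ht
      set p := x (Sum.inr (k + 1)) with hp
      have e1 : 1 - γ*ε*δ*v*u ≠ 0 := by intro hc; apply d1; linear_combination hc
      have e2 : 1 - γ*ε*δ*u*w ≠ 0 := by intro hc; apply d2; linear_combination hc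
      have e3 : 1 - γ*ε*δ*v*t ≠ 0 := by intro hc; apply d3; linear_combination hc
      field_simp
      ring
    · have hq : (1 : ℝ) - (ε * δ * γ) * (x (Sum.inl (k + 1)) * x (Sum.inr k)) ≠ 0 := by
        have := (h (k + 1)).2; rw [hk2] at this; exact hD (k + 1) k this
      have heq : (fun y : Phase N => miuraM3T2 ε δ γ y (Sum.inr k)) =
          fun y : Phase N => (0 * y (Sum.inl (k + 1)) + 1 * y (Sum.inr k)
              + γ * (y (Sum.inl (k + 1)) * y (Sum.inr k)))
            / (1 - (ε * δ * γ) * (y (Sum.inl (k + 1)) * y (Sum.inr k))) := by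
        funext y; simp only [miuraM3T2, c1, c2]; ring
      rw [heq, pullback_sum _ _ (by simp) 0 1 γ (ε * δ * γ) x _ hq]
      have d1 := (h k).1; have d2 := (h (k + 1)).1
      have d3 := (h (k + 1)).2; rw [hk2] at d3
      simp only [c1, c2] at d1 d2 d3
      simp only [m3tlF, m2tlF, miuraM3T2, c1, c2, hk1, hk2]
      set u := x (Sum.inl k) with hu
      set v := x (Sum.inr k) with hv
      set w := x (Sum.inr (k - 1)) with hw
      set z := x (Sum.inl (k - 1)) with hz
      set t := x (Sum.inl (k + 1)) with ht
      set p := x (Sum.inr (k + 1)) with hp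
      have e1 : 1 - γ*v*ε*δ*u ≠ 0 := by intro hc; apply d1; linear_combination hc
      have e2 : 1 - γ*ε*δ*t*p ≠ 0 := by intro hc; apply d2; linear_combination hc
      have e3 : 1 - γ*v*ε*δ*t ≠ 0 := by intro hc; apply d3; linear_combination hc
      field_simp
      ring
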